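/- In the family L(α_3,α_4) with α_4 ≠ 0 (notation as in context), the algebra is isomorphic to L(1,1) if α_3 = α_4, and to L(0,1) if α_3 ≠ α_4; moreover L(1,1) and L(0,1) are not isomorphic. -/

import Mathlib

/-- The `(n+1)`-dimensional family `L(α_3,α_4)`:
`[e_1,e_1]=e_3`, `[e_2,e_1]=e_3`, `[e_i,e_1]=e_{i+1}` for `3 ≤ i ≤ n`,
`[e_1,e_2]=α_3 e_{n+1}`, `[e_2,e_2]=α_4 e_{n+1}`, other products zero. -/
def famMul (n : ℕ) (hn : 4 ≤ n) (α3 α4 : ℂ) (x y : Fin (n+1) → ℂ) :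
    Fin (n+1) → ℂ :=
  fun k =>
    if h : (k : ℕ) = 2 then
      (x ⟨0, by omega⟩ + x ⟨1, by omega⟩) * y ⟨0, by omega⟩
    else if h2 : 3 ≤ (k : ℕ) ∧ (k : ℕ) ≤ n - 1 then
      x ⟨(k : ℕ) - 1, by have := k.isLt; omega⟩ * y ⟨0, by omega⟩
    else if h3 : (k : ℕ) = n then
      x ⟨n - 1, by omega⟩ * y ⟨0, by omega⟩ +
        α3 * (x ⟨0, by omega⟩ * y ⟨1, by omega⟩) +
        α4 * (x ⟨1, by omega⟩ * y ⟨1, by omega⟩)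
    else 0

/-- The basis-change map; `a3 a4` are the TARGET parameters. -/
noncomputable def FF (n : ℕ) (hn : 4 ≤ n) (A B a3 a4 : ℂ) (x : Fin (n+1) → ℂ) :
    Fin (n+1) → ℂ := fun k =>
  if (k : ℕ) = 0 then A * x ⟨0, by omega⟩
  else if (k : ℕ) = 1 then B * x ⟨0, by omega⟩ + (A+B) * x ⟨1, by omega⟩
  else if (k : ℕ) = 2 then A*(A+B) * x ⟨2, by omega⟩
  else A^((k : ℕ)-1)*(A+B) * x k
       + (if (k : ℕ) = n-1 then B*(a3-a4) * x ⟨1, by omega⟩ else 0)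
       + (if (k : ℕ) = n then B*(A*a3+B*a4) * x ⟨2, by omega⟩ else 0)

noncomputable def GG (n : ℕ) (hn : 4 ≤ n) (A B a3 a4 : ℂ) (y : Fin (n+1) → ℂ) :
    Fin (n+1) → ℂ := fun k =>
  if (k : ℕ) = 0 then y ⟨0, by omega⟩ / A
  else if (k : ℕ) = 1 then (y ⟨1, by omega⟩ - B * (y ⟨0, by omega⟩ / A)) / (A+B)
  else if (k : ℕ) = 2 then y ⟨2, by omega⟩ / (A*(A+B))
  else (y k
        - (if (k : ℕ) = n-1 then
            B*(a3-a4) * ((y ⟨1, by omega⟩ - B * (y ⟨0, by omega⟩ / A)) / (A+B)) else 0)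
        - (if (k : ℕ) = n then
            B*(A*a3+B*a4) * (y ⟨2, by omega⟩ / (A*(A+B))) else 0))
       / (A^((k : ℕ)-1)*(A+B))

section eval
variable {n : ℕ} {hn : 4 ≤ n} {A B a3 a4 α3 α4 : ℂ} {x y : Fin (n+1) → ℂ}

lemma FF0 : FF n hn A B a3 a4 x ⟨0, by omega⟩ = A * x ⟨0, by omega⟩ := by simp [FF]

lemma FF1 : FF n hn A B a3 a4 x ⟨1, by omega⟩
    = B * x ⟨0, by omega⟩ + (A+B) * x ⟨1, by omega⟩ := by simp [FF]

lemma FF2 : FF n hn A B a3 a4 x ⟨2, by omega⟩ = A*(A+B) * x ⟨2, by omega⟩ := by simp [FF]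

lemma FFge3 {kv : ℕ} (h3 : 3 ≤ kv) (hk : kv < n+1) :
    FF n hn A B a3 a4 x ⟨kv, hk⟩
    = A^(kv-1)*(A+B) * x ⟨kv, hk⟩
      + (if kv = n-1 then B*(a3-a4) * x ⟨1, by omega⟩ else 0)
      + (if kv = n then B*(A*a3+B*a4) * x ⟨2, by omega⟩ else 0) := by
  simp only [FF]
  rw [if_neg (by omega), if_neg (by omega), if_neg (by omega)]

lemma GG0 : GG n hn A B a3 a4 y ⟨0, by omega⟩ = y ⟨0, by omega⟩ / A := by simp [GG]

lemma GG1 : GG n hn A B a3 a4 y ⟨1, by omega⟩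
    = (y ⟨1, by omega⟩ - B * (y ⟨0, by omega⟩ / A)) / (A+B) := by simp [GG]

lemma GG2 : GG n hn A B a3 a4 y ⟨2, by omega⟩ = y ⟨2, by omega⟩ / (A*(A+B)) := by
  simp [GG]

lemma GGge3 {kv : ℕ} (h3 : 3 ≤ kv) (hk : kv < n+1) :
    GG n hn A B a3 a4 y ⟨kv, hk⟩
    = (y ⟨kv, hk⟩
        - (if kv = n-1 then
            B*(a3-a4) * ((y ⟨1, by omega⟩ - B * (y ⟨0, by omega⟩ / A)) / (A+B)) else 0)
        - (if kv = n then
            B*(A*a3+B*a4) * (y ⟨2, by omega⟩ / (A*(A+B))) else 0))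
       / (A^(kv-1)*(A+B)) := by
  simp only [GG]
  rw [if_neg (by omega), if_neg (by omega), if_neg (by omega)]

lemma fam0 : famMul n hn α3 α4 x y ⟨0, by omega⟩ = 0 := by
  simp only [famMul]
  rw [dif_neg (by omega), dif_neg (by omega), dif_neg (by omega)]

lemma fam1 : famMul n hn α3 α4 x y ⟨1, by omega⟩ = 0 := by
  simp only [famMul]
  rw [dif_neg (by omega), dif_neg (by omega), dif_neg (by omega)]

lemma fam2 : famMul n hn α3 α4 x y ⟨2, by omega⟩
    = (x ⟨0, by omega⟩ + x ⟨1, by omega⟩) * y ⟨0, by omega⟩ := by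
  simp [famMul]

lemma famMid {kv j : ℕ} (h3 : 3 ≤ kv) (hk : kv ≤ n - 1) (hj : j = kv - 1) :
    famMul n hn α3 α4 x y ⟨kv, by omega⟩
    = x ⟨j, by omega⟩ * y ⟨0, by omega⟩ := by
  subst hj
  simp only [famMul, Fin.val_mk]
  rw [dif_neg (by omega), dif_pos (by omega)]

lemma famN : famMul n hn α3 α4 x y ⟨n, by omega⟩
    = x ⟨n - 1, by omega⟩ * y ⟨0, by omega⟩ +
        α3 * (x ⟨0, by omega⟩ * y ⟨1, by omega⟩) +
        α4 * (x ⟨1, by omega⟩ * y ⟨1, by omega⟩) := by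
  simp only [famMul, Fin.val_mk]
  rw [dif_neg (show ¬ n = 2 by omega), dif_neg (show ¬(3 ≤ n ∧ n ≤ n-1) by omega)]
  simp

lemma famN' {kv : ℕ} (hkv : kv = n) :
    famMul n hn α3 α4 x y ⟨kv, by omega⟩
    = x ⟨n - 1, by omega⟩ * y ⟨0, by omega⟩ +
        α3 * (x ⟨0, by omega⟩ * y ⟨1, by omega⟩) +
        α4 * (x ⟨1, by omega⟩ * y ⟨1, by omega⟩) := by
  subst hkv; exact famN

end eval

lemma FF_add (n : ℕ) (hn : 4 ≤ n) (A B a3 a4 : ℂ) (x y : Fin (n+1) → ℂ) :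
    FF n hn A B a3 a4 (x + y) = FF n hn A B a3 a4 x + FF n hn A B a3 a4 y := by
  funext k
  simp only [FF, Pi.add_apply]
  split_ifs <;> ring

lemma FF_smul (n : ℕ) (hn : 4 ≤ n) (A B a3 a4 : ℂ) (c : ℂ) (x : Fin (n+1) → ℂ) :
    FF n hn A B a3 a4 (c • x) = c • FF n hn A B a3 a4 x := by
  funext k
  simp only [FF, Pi.smul_apply, smul_eq_mul]
  split_ifs <;> ring

lemma GG_FF (n : ℕ) (hn : 4 ≤ n) (A B a3 a4 : ℂ) (hA : A ≠ 0) (hAB : A + B ≠ 0)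
    (x : Fin (n+1) → ℂ) : GG n hn A B a3 a4 (FF n hn A B a3 a4 x) = x := by
  funext k
  rcases k with ⟨kv, hk⟩
  by_cases h0 : kv = 0
  · subst h0; rw [GG0, FF0]; field_simp
  by_cases h1 : kv = 1
  · subst h1; rw [GG1, FF1, FF0]; field_simp; try ring
  by_cases h2 : kv = 2
  · subst h2; rw [GG2, FF2]; field_simp
  · have h3 : 3 ≤ kv := by omega
    have hApow : A ^ (kv - 1) ≠ 0 := pow_ne_zero _ hA
    rw [GGge3 h3 hk, FFge3 h3 hk, FF0, FF1, FF2]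
    split_ifs <;> first | omega | (field_simp; try ring)

lemma FF_GG (n : ℕ) (hn : 4 ≤ n) (A B a3 a4 : ℂ) (hA : A ≠ 0) (hAB : A + B ≠ 0)
    (y : Fin (n+1) → ℂ) : FF n hn A B a3 a4 (GG n hn A B a3 a4 y) = y := by
  funext k
  rcases k with ⟨kv, hk⟩
  by_cases h0 : kv = 0
  · subst h0; rw [FF0, GG0]; field_simp
  by_cases h1 : kv = 1
  · subst h1; rw [FF1, GG1, GG0]; field_simp; try ring
  by_cases h2 : kv = 2
  · subst h2; rw [FF2, GG2]; field_simp
  · have h3 : 3 ≤ kv := by omega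
    have hApow : A ^ (kv - 1) ≠ 0 := pow_ne_zero _ hA
    rw [FFge3 h3 hk, GGge3 h3 hk, GG1, GG2]
    split_ifs <;> first | omega | (field_simp; try ring)

noncomputable def FFequiv (n : ℕ) (hn : 4 ≤ n) (A B a3 a4 : ℂ) (hA : A ≠ 0)
    (hAB : A + B ≠ 0) : (Fin (n+1) → ℂ) ≃ₗ[ℂ] (Fin (n+1) → ℂ) where
  toFun := FF n hn A B a3 a4
  map_add' := FF_add n hn A B a3 a4
  map_smul' := FF_smul n hn A B a3 a4
  invFun := GG n hn A B a3 a4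
  left_inv := GG_FF n hn A B a3 a4 hA hAB
  right_inv := FF_GG n hn A B a3 a4 hA hAB

lemma FF_hom (n : ℕ) (hn : 4 ≤ n) (A B a3 a4 α3 α4 : ℂ)
    (h3 : A*a3 + B*a4 = A^(n-1) * α3) (h4 : (A+B)*a4 = A^(n-1) * α4)
    (x y : Fin (n+1) → ℂ) :
    FF n hn A B a3 a4 (famMul n hn α3 α4 x y)
    = famMul n hn a3 a4 (FF n hn A B a3 a4 x) (FF n hn A B a3 a4 y) := by
  funext k
  rcases k with ⟨kv, hk⟩
  by_cases h0 : kv = 0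
  · subst h0; rw [FF0, fam0, fam0, mul_zero]
  by_cases h1 : kv = 1
  · subst h1; rw [FF1, fam0, fam1, fam1]; ring
  by_cases h2 : kv = 2
  · subst h2; rw [FF2, fam2, fam2, FF0, FF0, FF1]; ring
  have h3k : 3 ≤ kv := by omega
  rw [FFge3 h3k hk]
  by_cases hnn : kv = n
  · have hpow : A^(n-1) = A^(n-2)*A := by
      rw [show n-1 = (n-2)+1 by omega, pow_succ]
    rw [if_neg (by omega : ¬ kv = n - 1), if_pos hnn, famN' hnn, fam2, famN' hnn,
        FFge3 (show 3 ≤ n-1 by omega) (by omega),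
        if_pos rfl, if_neg (by omega : ¬ n - 1 = n), FF0, FF0, FF1, FF1,
        show n-1-1 = n-2 by omega, show kv-1 = n-1 by omega]
    linear_combination ((A+B) * (x ⟨n-1, by omega⟩ * y ⟨0, by omega⟩)) * hpow
      - ((A+B) * (x ⟨0, by omega⟩ * y ⟨1, by omega⟩)) * h3
      - ((A+B) * (x ⟨1, by omega⟩ * y ⟨1, by omega⟩)) * h4
  · rw [if_neg hnn]
    have hkn1 : kv ≤ n - 1 := by omega
    rw [famMid h3k hkn1 rfl, famMid h3k hkn1 rfl, FF0]
    by_cases hn1 : kv = n - 1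
    · rw [if_pos hn1, fam1, mul_zero, add_zero, add_zero]
      by_cases hk3 : kv = 3
      · subst hk3
        simp only [show (3:ℕ)-1 = 2 from rfl]
        rw [FF2]
        ring
      · have h3k1 : 3 ≤ kv - 1 := by omega
        have hpow2 : A^(kv-1) = A^(kv-2)*A := by
          rw [show kv-1 = (kv-2)+1 by omega, pow_succ]
        rw [FFge3 h3k1 (by omega), if_neg (by omega : ¬ kv - 1 = n - 1),
            if_neg (by omega : ¬ kv - 1 = n), show kv-1-1 = kv-2 by omega]
        linear_combination ((A+B) * (x ⟨kv-1, by omega⟩ * y ⟨0, by omega⟩)) * hpow2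
    · rw [if_neg hn1, add_zero, add_zero]
      by_cases hk3 : kv = 3
      · subst hk3
        simp only [show (3:ℕ)-1 = 2 from rfl]
        rw [FF2]
        ring
      · have h3k1 : 3 ≤ kv - 1 := by omega
        have hpow2 : A^(kv-1) = A^(kv-2)*A := by
          rw [show kv-1 = (kv-2)+1 by omega, pow_succ]
        rw [FFge3 h3k1 (by omega), if_neg (by omega : ¬ kv - 1 = n - 1),
            if_neg (by omega : ¬ kv - 1 = n), show kv-1-1 = kv-2 by omega]
        linear_combination ((A+B) * (x ⟨kv-1, by omega⟩ * y ⟨0, by omega⟩)) * hpow2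

section part3
variable {n : ℕ} {hn : 4 ≤ n}

/-- `v = e₁ - e₂` is a left annihilator of `L(1,1)`. -/
lemma v_ann (y : Fin (n+1) → ℂ) :
    famMul n hn 1 1 (fun j => if (j : ℕ) = 0 then 1 else if (j : ℕ) = 1 then -1 else 0) y
      = 0 := by
  funext k
  rcases k with ⟨kv, hk⟩
  simp only [Pi.zero_apply]
  by_cases h2 : kv = 2
  · subst h2; rw [fam2]; norm_num
  by_cases hm : 3 ≤ kv ∧ kv ≤ n - 1
  · rw [famMid hm.1 hm.2 rfl]
    simp [show ¬ kv - 1 = 0 by omega, show ¬ kv - 1 = 1 by omega]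
  by_cases hnn : kv = n
  · rw [famN' hnn]
    simp [show ¬ n - 1 = 0 by omega, show ¬ n - 1 = 1 by omega]
  · have h01 : kv = 0 ∨ kv = 1 := by omega
    rcases h01 with h | h
    · subst h; rw [fam0]
    · subst h; rw [fam1]

/-- `w = e_{n+1}` is a left annihilator of `L(1,1)`. -/
lemma w_ann (y : Fin (n+1) → ℂ) :
    famMul n hn 1 1 (fun j => if (j : ℕ) = n then 1 else 0) y = 0 := by
  funext k
  rcases k with ⟨kv, hk⟩
  simp only [Pi.zero_apply]
  by_cases h2 : kv = 2
  · subst h2; rw [fam2]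
    simp [show ¬ (0:ℕ) = n by omega, show ¬ (1:ℕ) = n by omega]
  by_cases hm : 3 ≤ kv ∧ kv ≤ n - 1
  · rw [famMid hm.1 hm.2 rfl]
    simp [show ¬ kv - 1 = n by omega]
  by_cases hnn : kv = n
  · rw [famN' hnn]
    simp [show ¬ n - 1 = n by omega, show ¬ (0:ℕ) = n by omega,
      show ¬ (1:ℕ) = n by omega]
  · have h01 : kv = 0 ∨ kv = 1 := by omega
    rcases h01 with h | h
    · subst h; rw [fam0]
    · subst h; rw [fam1]

/-- A left annihilator of `L(0,1)` is supported on the last coordinate. -/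
lemma ann01 (z : Fin (n+1) → ℂ) (hz : ∀ y, famMul n hn 0 1 z y = 0)
    {kv : ℕ} (hk : kv < n+1) (hkn : kv ≠ n) : z ⟨kv, hk⟩ = 0 := by
  have e1 : Fin (n+1) → ℂ := 0
  -- z₁ = 0
  have hz1 : z ⟨1, by omega⟩ = 0 := by
    have := congrFun (hz (fun j => if (j : ℕ) = 1 then 1 else 0)) ⟨n, by omega⟩
    rw [famN' rfl, Pi.zero_apply] at this
    simpa [show ¬ (0:ℕ) = 1 by omega] using this
  -- z₀ = 0
  have hz0 : z ⟨0, by omega⟩ = 0 := by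
    have := congrFun (hz (fun j => if (j : ℕ) = 0 then 1 else 0)) ⟨2, by omega⟩
    rw [fam2, Pi.zero_apply] at this
    simp only [hz1] at this
    simpa using this
  by_cases h0 : kv = 0
  · subst h0; exact hz0
  by_cases h1 : kv = 1
  · subst h1; exact hz1
  by_cases hn1 : kv = n - 1
  · have := congrFun (hz (fun j => if (j : ℕ) = 0 then 1 else 0)) ⟨n, by omega⟩
    rw [famN' rfl, Pi.zero_apply] at this
    simp only [hz1] at this
    simp only [show ¬ (1:ℕ) = 0 by omega] at this
    norm_num at this
    subst hn1
    exact this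
  · -- 2 ≤ kv ≤ n-2
    have := congrFun (hz (fun j => if (j : ℕ) = 0 then 1 else 0)) ⟨kv + 1, by omega⟩
    rw [famMid (by omega) (by omega) rfl, Pi.zero_apply] at this
    simp only [show kv + 1 - 1 = kv from rfl] at this
    simpa using this

end part3


/-- For `α_4 ≠ 0`: `L(α_3,α_4) ≅ L(1,1)` if `α_3 = α_4`, and
`L(α_3,α_4) ≅ L(0,1)` if `α_3 ≠ α_4`; moreover `L(1,1)` and `L(0,1)` are
not isomorphic. -/
theorem fam_alpha4_nonzero_iso (n : ℕ) (hn : 4 ≤ n) (α3 α4 : ℂ) (hα4 : α4 ≠ 0) :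
    (α3 = α4 →
      ∃ f : (Fin (n+1) → ℂ) ≃ₗ[ℂ] (Fin (n+1) → ℂ),
        ∀ x y, f (famMul n hn α3 α4 x y) = famMul n hn 1 1 (f x) (f y)) ∧
    (α3 ≠ α4 →
      ∃ f : (Fin (n+1) → ℂ) ≃ₗ[ℂ] (Fin (n+1) → ℂ),
        ∀ x y, f (famMul n hn α3 α4 x y) = famMul n hn 0 1 (f x) (f y)) ∧
    ¬ ∃ f : (Fin (n+1) → ℂ) ≃ₗ[ℂ] (Fin (n+1) → ℂ),
        ∀ x y, f (famMul n hn 1 1 x y) = famMul n hn 0 1 (f x) (f y) := by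
  refine ⟨?_, ?_, ?_⟩
  · -- α3 = α4 : isomorphic to L(1,1)
    intro heq
    have hα3 : α3 ≠ 0 := heq ▸ hα4
    obtain ⟨A, hA⟩ := IsAlgClosed.exists_pow_nat_eq (k := ℂ) α3⁻¹ (n := n - 2) (by omega)
    have hA0 : A ≠ 0 := by
      intro h; rw [h, zero_pow (by omega : n - 2 ≠ 0)] at hA
      exact hα3 (by simpa [eq_comm, inv_eq_zero] using hA)
    have hpow : A ^ (n-1) = A ^ (n-2) * A := by
      rw [show n-1 = (n-2)+1 by omega, pow_succ]
    have h3 : A * 1 + 0 * 1 = A ^ (n-1) * α3 := by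
      rw [hpow, hA]; field_simp; ring
    have h4 : (A + 0) * 1 = A ^ (n-1) * α4 := by
      rw [hpow, hA, ← heq]; field_simp; ring
    exact ⟨FFequiv n hn A 0 1 1 hA0 (by simpa using hA0),
      fun x y => FF_hom n hn A 0 1 1 α3 α4 h3 h4 x y⟩
  · -- α3 ≠ α4 : isomorphic to L(0,1)
    intro hne
    have hd : α4 - α3 ≠ 0 := sub_ne_zero.mpr (Ne.symm hne)
    obtain ⟨A, hA⟩ := IsAlgClosed.exists_pow_nat_eq (k := ℂ) (α4 - α3)⁻¹ (n := n - 2)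
      (by omega)
    have hA0 : A ≠ 0 := by
      intro h; rw [h, zero_pow (by omega : n - 2 ≠ 0)] at hA
      exact hd (by simpa [eq_comm, inv_eq_zero] using hA)
    have hpow : A ^ (n-1) = A ^ (n-2) * A := by
      rw [show n-1 = (n-2)+1 by omega, pow_succ]
    have hAeq : A ^ (n-1) * (α4 - α3) = A := by
      rw [hpow, hA]; field_simp
    have hAB : A + A ^ (n-1) * α3 = A ^ (n-1) * α4 := by
      linear_combination -hAeq
    have hAB0 : A + A ^ (n-1) * α3 ≠ 0 := by
      rw [hAB]
      exact mul_ne_zero (pow_ne_zero _ hA0) hα4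
    have h3 : A * 0 + (A ^ (n-1) * α3) * 1 = A ^ (n-1) * α3 := by ring
    have h4 : (A + A ^ (n-1) * α3) * 1 = A ^ (n-1) * α4 := by rw [mul_one, hAB]
    exact ⟨FFequiv n hn A (A ^ (n-1) * α3) 0 1 hA0 hAB0,
      fun x y => FF_hom n hn A (A ^ (n-1) * α3) 0 1 α3 α4 h3 h4 x y⟩
  · -- L(1,1) and L(0,1) are not isomorphic
    rintro ⟨f, hf⟩
    set v : Fin (n+1) → ℂ :=
      fun j => if (j : ℕ) = 0 then 1 else if (j : ℕ) = 1 then -1 else 0 with hv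
    set w : Fin (n+1) → ℂ := fun j => if (j : ℕ) = n then 1 else 0 with hw
    have hfv : ∀ z, famMul n hn 0 1 (f v) z = 0 := by
      intro z
      obtain ⟨u, hu⟩ := f.surjective z
      rw [← hu, ← hf, v_ann, map_zero]
    have hfw : ∀ z, famMul n hn 0 1 (f w) z = 0 := by
      intro z
      obtain ⟨u, hu⟩ := f.surjective z
      rw [← hu, ← hf, w_ann, map_zero]
    have hv0 : ∀ {kv : ℕ} (hk : kv < n+1), kv ≠ n → f v ⟨kv, hk⟩ = 0 :=
      fun hk hkn => ann01 (f v) hfv hk hkn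
    have hw0 : ∀ {kv : ℕ} (hk : kv < n+1), kv ≠ n → f w ⟨kv, hk⟩ = 0 :=
      fun hk hkn => ann01 (f w) hfw hk hkn
    have key : f (f w ⟨n, by omega⟩ • v - f v ⟨n, by omega⟩ • w) = 0 := by
      rw [map_sub, map_smul, map_smul]
      funext k
      rcases k with ⟨kv, hk⟩
      simp only [Pi.sub_apply, Pi.smul_apply, smul_eq_mul, Pi.zero_apply]
      by_cases hkn : kv = n
      · subst hkn; ring
      · rw [hv0 hk hkn, hw0 hk hkn]; ring
    have hzero := (LinearEquiv.map_eq_zero_iff f).mp key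
    have hb : f w ⟨n, by omega⟩ = 0 := by
      have := congrFun hzero ⟨0, by omega⟩
      simp only [Pi.sub_apply, Pi.smul_apply, smul_eq_mul, Pi.zero_apply, hv, hw] at this
      simp only [show ¬ (0:ℕ) = n by omega] at this
      simpa using this
    have hfw0 : f w = 0 := by
      funext k
      rcases k with ⟨kv, hk⟩
      by_cases hkn : kv = n
      · subst hkn
        simpa using hb
      · simpa using hw0 hk hkn
    have : w = 0 := (LinearEquiv.map_eq_zero_iff f).mp hfw0
    have := congrFun this ⟨n, by omega⟩
    simp [hw] at this
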